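/- Let λ be a partition with N parts, let ρ be a probability measure on partitions with N parts, let x₁,…,x_N be positive reals with s_λ(x₁,…,x_N) ≠ 0 for all λ in the support of ρ, and define the Schur generating function S(u₁,…,u_N) = Σ_λ ρ(λ) s_λ(u₁,…,u_N)/s_λ(x₁,…,x_N). Then for every positive integer k, the expectation under ρ of Σ_{i=1}^N (λ_i + N − i)^k equals [ (1/V_N(U)) Σ_{i=1}^N (u_i ∂_i)^k ( V_N(U)·S(U) ) ] evaluated at U = (x₁,…,x_N), where V_N is the Vandermonde determinant. -/

import Mathlib

/-- The Schur polynomial evaluated at `x`, defined as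
`det(x_i^{λ_j + N - j}) / ∏_{i<j}(x_i - x_j)`. -/
noncomputable def schurEval (N : ℕ) (lam : Fin N → ℕ) (x : Fin N → ℝ) : ℝ :=
  Matrix.det (Matrix.of fun i j : Fin N => x i ^ (lam j + (N - 1 - (j : ℕ)))) /
    ∏ i : Fin N, ∏ j ∈ Finset.Ioi i, (x i - x j)

open MvPolynomial

noncomputable def Dop (N : ℕ) (i : Fin N) :
    MvPolynomial (Fin N) ℝ →ₗ[ℝ] MvPolynomial (Fin N) ℝ :=
  (LinearMap.mulLeft ℝ (X i)).comp (pderiv i).toLinearMap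

lemma Dop_apply (N : ℕ) (i : Fin N) (p : MvPolynomial (Fin N) ℝ) :
    Dop N i p = X i * pderiv i p := rfl

lemma iter_eq (N : ℕ) (i : Fin N) (k : ℕ) (p : MvPolynomial (Fin N) ℝ) :
    (fun p : MvPolynomial (Fin N) ℝ => X i * pderiv i p)^[k] p = ((Dop N i)^k) p := by
  rw [Module.End.pow_apply]; rfl

lemma Dop_monomial (N : ℕ) (i : Fin N) (m : Fin N →₀ ℕ) (c : ℝ) :
    Dop N i (monomial m c) = ((m i : ℝ)) • monomial m c := by
  rw [Dop_apply, pderiv_monomial]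
  rcases Nat.eq_zero_or_pos (m i) with h | h
  · simp [h]
  · rw [X, monomial_mul, smul_monomial]
    have hm : Finsupp.single i 1 + (m - Finsupp.single i 1) = m := by
      ext j
      by_cases hj : j = i
      · subst hj
        simp only [Finsupp.add_apply, Finsupp.tsub_apply, Finsupp.single_apply,
          eq_self_iff_true, if_true]
        omega
      · simp [Finsupp.single_apply, Ne.symm hj, hj]
    rw [hm]
    congr 1
    rw [smul_eq_mul]
    ring
lemma Dop_pow_monomial (N : ℕ) (i : Fin N) (k : ℕ) (m : Fin N →₀ ℕ) (c : ℝ) :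
    ((Dop N i)^k) (monomial m c) = ((m i : ℝ))^k • monomial m c := by
  induction k with
  | zero => simp
  | succ n ih =>
    rw [pow_succ, Module.End.mul_apply, Dop_monomial, map_smul, ih, smul_smul, ← pow_succ']

lemma prod_pow_eq_monomial' (N : ℕ) (s : Fin N →₀ ℕ) :
    ∏ j : Fin N, (X j : MvPolynomial (Fin N) ℝ) ^ s j = monomial s 1 := by
  classical
  rw [← prod_X_pow_eq_monomial]
  exact (Finset.prod_subset (Finset.subset_univ _) (by
    intro j _ hj
    rw [Finsupp.notMem_support_iff] at hj
    simp [hj])).symm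

lemma eigen (N : ℕ) (k : ℕ) (a : Fin N → ℕ) :
    ∑ i : Fin N, ((Dop N i)^k)
        (Matrix.det (Matrix.of fun i j : Fin N => (X i : MvPolynomial (Fin N) ℝ) ^ a j))
      = (∑ j : Fin N, ((a j : ℝ))^k) •
        Matrix.det (Matrix.of fun i j : Fin N => (X i : MvPolynomial (Fin N) ℝ) ^ a j) := by
  classical
  rw [Matrix.det_apply]
  simp_rw [Units.smul_def]
  simp_rw [map_sum]
  rw [Finset.sum_comm, Finset.smul_sum]
  refine Finset.sum_congr rfl fun σ _ => ?_
  have hprod : (∏ i : Fin N, (Matrix.of fun i j : Fin N =>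
        (X i : MvPolynomial (Fin N) ℝ) ^ a j) (σ i) i)
      = monomial (Finsupp.equivFunOnFinite.symm fun t => a (σ⁻¹ t)) 1 := by
    rw [← prod_pow_eq_monomial']
    refine Fintype.prod_equiv σ _ _ (fun j => ?_)
    simp only [Matrix.of_apply]
    congr 1
    show a j = a (σ⁻¹ (σ j))
    rw [← Equiv.Perm.mul_apply, inv_mul_cancel, Equiv.Perm.one_apply]
  rw [hprod]
  have key : ∀ i : Fin N, ((Dop N i)^k) ((Equiv.Perm.sign σ : ℤ) •
        (monomial (Finsupp.equivFunOnFinite.symm fun t => a (σ⁻¹ t)) (1:ℝ)))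
      = (Equiv.Perm.sign σ : ℤ) • (((a (σ⁻¹ i) : ℝ))^k •
        monomial (Finsupp.equivFunOnFinite.symm fun t => a (σ⁻¹ t)) (1:ℝ)) := by
    intro i
    rw [map_zsmul, Dop_pow_monomial]
    rfl
  rw [Finset.sum_congr rfl fun i _ => key i, ← Finset.smul_sum, ← Finset.sum_smul]
  rw [smul_comm]
  congr 1
  exact Fintype.sum_equiv σ⁻¹ _ _ (fun i => rfl)

open MvPolynomial in
/-- For a (finitely supported) probability measure `ρ` on partitions with `N`
parts and the Schur generating function `S(u) = Σ_λ ρ(λ) s_λ(u)/s_λ(x)`, the expectation of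
`Σ_i (λ_i + N - i)^k` equals `[(1/V_N) Σ_i (u_i∂_i)^k (V_N · S)]` evaluated at `u = x`.
Here `V_N(u)·S(u) = Σ_λ (ρ(λ)/s_λ(x)) · det(u_i^{λ_j+N-j})` is a polynomial. -/
theorem stmt_9 (N : ℕ) (hN : 1 ≤ N) (k : ℕ) (hk : 1 ≤ k)
    (Λ : Finset (Fin N → ℕ)) (hΛ : ∀ lam ∈ Λ, Antitone lam)
    (ρ : (Fin N → ℕ) → ℝ) (hρ0 : ∀ lam ∈ Λ, 0 ≤ ρ lam) (hρ1 : ∑ lam ∈ Λ, ρ lam = 1)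
    (x : Fin N → ℝ) (hx : ∀ i, 0 < x i) (hinj : Function.Injective x)
    (hs : ∀ lam ∈ Λ, schurEval N lam x ≠ 0) :
    ∑ lam ∈ Λ, ρ lam * ∑ i : Fin N, ((lam i + (N - 1 - (i : ℕ)) : ℕ) : ℝ) ^ k =
      MvPolynomial.eval x
          (∑ i : Fin N,
            (fun p : MvPolynomial (Fin N) ℝ => X i * pderiv i p)^[k]
              (∑ lam ∈ Λ,
                C (ρ lam / schurEval N lam x) *
                  Matrix.det (Matrix.of fun i j : Fin N =>
                    (X i : MvPolynomial (Fin N) ℝ) ^ (lam j + (N - 1 - (j : ℕ)))))) /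
        ∏ i : Fin N, ∏ j ∈ Finset.Ioi i, (x i - x j) := by
  classical
  set V : ℝ := ∏ i : Fin N, ∏ j ∈ Finset.Ioi i, (x i - x j) with hV
  set a : (Fin N → ℕ) → Fin N → ℕ := fun lam j => lam j + (N - 1 - (j : ℕ)) with ha
  set detP : (Fin N → ℕ) → MvPolynomial (Fin N) ℝ := fun lam =>
    Matrix.det (Matrix.of fun i j : Fin N => (X i : MvPolynomial (Fin N) ℝ) ^ a lam j)
    with hdetP
  set detx : (Fin N → ℕ) → ℝ := fun lam =>
    Matrix.det (Matrix.of fun i j : Fin N => x i ^ a lam j) with hdetx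
  have hse : ∀ lam, schurEval N lam x = detx lam / V := fun _ => rfl
  have hVne : V ≠ 0 := by
    rw [hV]
    refine Finset.prod_ne_zero_iff.mpr fun i _ => Finset.prod_ne_zero_iff.mpr fun j hj => ?_
    exact sub_ne_zero_of_ne fun h => (Finset.mem_Ioi.mp hj).ne' (hinj h.symm)
  have hdx : ∀ lam ∈ Λ, detx lam = schurEval N lam x * V := by
    intro lam hl
    rw [hse lam, div_mul_cancel₀ _ hVne]
  have heval : ∀ lam, MvPolynomial.eval x (detP lam) = detx lam := by
    intro lam
    rw [hdetP, hdetx, RingHom.map_det]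
    congr 1
    ext i j
    simp [Matrix.map_apply]
  have hmain : (∑ i : Fin N,
      (fun p : MvPolynomial (Fin N) ℝ => X i * pderiv i p)^[k]
        (∑ lam ∈ Λ, C (ρ lam / schurEval N lam x) * detP lam))
      = ∑ lam ∈ Λ, (ρ lam / schurEval N lam x) •
          ((∑ j : Fin N, ((a lam j : ℝ))^k) • detP lam) := by
    simp_rw [iter_eq, ← smul_eq_C_mul, map_sum, map_smul]
    rw [Finset.sum_comm]
    refine Finset.sum_congr rfl fun lam _ => ?_
    rw [← Finset.smul_sum]
    congr 1
    exact eigen N k (a lam)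
  rw [hmain, map_sum]
  simp_rw [smul_eval, heval]
  rw [Finset.sum_div]
  refine Finset.sum_congr rfl fun lam hl => ?_
  rw [hdx lam hl]
  show ρ lam * (∑ j : Fin N, ((a lam j : ℝ))^k) = _
  field_simp [hs lam hl]
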